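/- In the traveling salesman setting with Aut(G) acting transitively on E(G), fix a hamiltonian cycle u₀ and let s be a sum of squares of polynomials in the edge variables of degree k restricted to X. Then s ∈ Σ(φ(u₀)) (i.e., φ(u₀) − ∫_X φ s dμ ∈ span(x̄)) if and only if there exist real numbers α, β with α − β = 1 such that ∫_X x_{ij} s dμ = α for all edges ij ∈ u₀ and ∫_X x_{ij} s dμ = β for all edges ij ∉ u₀. -/

import Mathlib

open SimpleGraph MvPolynomial
open scoped Classical

/-- A (sub)graph is a hamiltonian cycle graph: connected and 2-regular. -/
def IsHamCycleGraph {VT : Type*} (C : SimpleGraph VT) : Prop :=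
  C.Connected ∧ ∀ v : VT, (C.neighborSet v).ncard = 2

section aux

variable {n : ℕ}

lemma push_ham {σ : Fin n ≃ Fin n} {u : SimpleGraph (Fin n)} (h : IsHamCycleGraph u) :
    IsHamCycleGraph (u.map σ.toEmbedding) := by
  constructor
  · exact ((SimpleGraph.Iso.map σ u).connected_iff).mp h.1
  · intro v
    have e := ((SimpleGraph.Iso.map σ u).mapNeighborSet (σ.symm v))
    have hv : (SimpleGraph.Iso.map σ u) (σ.symm v) = v := by simp
    rw [hv] at e
    rw [← Nat.card_coe_set_eq, ← Nat.card_congr (e.trans (Equiv.refl ((u.map σ.toEmbedding).neighborSet v))), Nat.card_coe_set_eq, h.2]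

lemma push_le {G : SimpleGraph (Fin n)} (σ : G ≃g G) {u : SimpleGraph (Fin n)}
    (h : u ≤ G) : u.map σ.toEquiv.toEmbedding ≤ G := by
  intro x y hxy
  rw [SimpleGraph.map_adj] at hxy
  obtain ⟨a, b, hab, ha, hb⟩ := hxy
  subst ha; subst hb
  exact σ.map_rel_iff.mpr (h hab)

lemma push_push {σ : Fin n ≃ Fin n} (u : SimpleGraph (Fin n)) :
    (u.map σ.toEmbedding).map σ.symm.toEmbedding = u := by
  ext x y
  simp only [SimpleGraph.map_adj, Equiv.toEmbedding_apply]
  constructor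
  · rintro ⟨a, b, ⟨c, d, hcd, hc, hd⟩, ha, hb⟩
    subst hc; subst hd; subst ha; subst hb
    simpa using hcd
  · intro hxy
    exact ⟨σ x, σ y, ⟨x, y, hxy, rfl, rfl⟩, by simp, by simp⟩

lemma push_edge {G : SimpleGraph (Fin n)} (σ : G ≃g G) {u : SimpleGraph (Fin n)}
    (e : Sym2 (Fin n)) :
    Sym2.map (⇑σ) e ∈ (u.map σ.toEquiv.toEmbedding).edgeSet ↔ e ∈ u.edgeSet := by
  have h := (SimpleGraph.Iso.map σ.toEquiv u).map_mem_edgeSet_iff (e := e)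
  have hc : ⇑(SimpleGraph.Iso.map σ.toEquiv u) = ⇑σ := rfl
  rwa [hc] at h

end aux

theorem stmt_11 {n : ℕ} (G : SimpleGraph (Fin n))
    -- Aut(G) acts transitively on the edges of G
    (htrans : ∀ e ∈ G.edgeSet, ∀ f ∈ G.edgeSet, ∃ σ : G ≃g G, Sym2.map (⇑σ) e = f)
    (u₀ : SimpleGraph (Fin n)) (hu₀ : IsHamCycleGraph u₀ ∧ u₀ ≤ G)
    (k m : ℕ) (q : Fin m → MvPolynomial (Sym2 (Fin n)) ℝ)
    (hq : ∀ i, (q i).IsHomogeneous k) :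
    -- X = hamiltonian cycles of G with uniform measure; φ = edge-indicator vector
    let HC : Finset (SimpleGraph (Fin n)) :=
      Finset.univ.filter fun C => IsHamCycleGraph C ∧ C ≤ G
    let ind : SimpleGraph (Fin n) → Sym2 (Fin n) → ℝ := fun u e =>
      if e ∈ u.edgeSet then 1 else 0
    -- s = sum of squares of degree-k polynomials in the edge variables, restricted to X
    let s : SimpleGraph (Fin n) → ℝ := fun u => ∑ i, (eval (ind u) (q i)) ^ 2
    let xbar : Sym2 (Fin n) → ℝ := fun e => (∑ u ∈ HC, ind u e) / (HC.card : ℝ)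
    -- s ∈ Σ(φ(u₀)) iff the two-values condition holds
    ((∃ t : ℝ, (fun e => ind u₀ e - (∑ u ∈ HC, s u * ind u e) / (HC.card : ℝ)) =
        fun e => t * xbar e) ↔
      ∃ a b : ℝ, a - b = 1 ∧ ∀ e ∈ G.edgeSet,
        (∑ u ∈ HC, ind u e * s u) / (HC.card : ℝ) = if e ∈ u₀.edgeSet then a else b) := by
  intro HC ind s xbar
  -- basic facts
  have hmemHC : ∀ u : SimpleGraph (Fin n), u ∈ HC ↔ IsHamCycleGraph u ∧ u ≤ G := by
    intro u; simp [HC]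
  have hu₀HC : u₀ ∈ HC := (hmemHC u₀).mpr hu₀
  have hcard : (0 : ℝ) < (HC.card : ℝ) := by
    have : 0 < HC.card := Finset.card_pos.mpr ⟨u₀, hu₀HC⟩
    exact_mod_cast this
  have hcard' : (HC.card : ℝ) ≠ 0 := ne_of_gt hcard
  -- u₀ has an edge
  obtain ⟨e₀, he₀⟩ : ∃ e₀, e₀ ∈ u₀.edgeSet := by
    have hconn := hu₀.1.1
    have hne : Nonempty (Fin n) := hconn.nonempty
    obtain ⟨v⟩ := hne
    have h2 := hu₀.1.2 v
    have : (u₀.neighborSet v).Nonempty :=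
      Set.nonempty_of_ncard_ne_zero (by omega)
    obtain ⟨w, hw⟩ := this
    exact ⟨s(v, w), hw⟩
  have he₀G : e₀ ∈ G.edgeSet := (SimpleGraph.edgeSet_mono hu₀.2) he₀
  -- the number of cycles through an edge
  set N : Sym2 (Fin n) → ℝ := fun e => ∑ u ∈ HC, ind u e with hN
  -- N is constant on G.edgeSet
  have hconst : ∀ e ∈ G.edgeSet, ∀ f ∈ G.edgeSet, N e = N f := by
    intro e he f hf
    obtain ⟨σ, hσ⟩ := htrans e he f hf
    refine Finset.sum_nbij' (fun u => u.map σ.toEquiv.toEmbedding)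
      (fun u => u.map σ.toEquiv.symm.toEmbedding) ?_ ?_ ?_ ?_ ?_
    · intro u hu
      rw [hmemHC] at hu ⊢
      exact ⟨push_ham hu.1, push_le σ hu.2⟩
    · intro u hu
      rw [hmemHC] at hu ⊢
      refine ⟨push_ham hu.1, ?_⟩
      intro x y hxy
      rw [SimpleGraph.map_adj] at hxy
      obtain ⟨a, b, hab, ha, hb⟩ := hxy
      subst ha; subst hb
      exact σ.symm.map_rel_iff.mpr (hu.2 hab)
    · intro u _; exact push_push u
    · intro u _
      have := push_push (σ := σ.toEquiv.symm) u
      simpa using this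
    · intro u _
      simp only [ind]
      rw [← hσ]
      simp only [push_edge σ e]
  have hNe₀ : 0 < N e₀ := by
    have h1 : ind u₀ e₀ = 1 := by simp [ind, he₀]
    have : ind u₀ e₀ ≤ N e₀ := by
      refine Finset.single_le_sum (f := fun u => ind u e₀) (fun u _ => ?_) hu₀HC
      simp only [ind]; positivity
    rw [h1] at this; linarith
  have hNpos : ∀ e ∈ G.edgeSet, 0 < N e := fun e he => hconst e he e₀ he₀G ▸ hNe₀
  -- off-edge vanishing
  have hoff : ∀ e ∉ G.edgeSet, ∀ u ∈ HC, ind u e = 0 := by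
    intro e he u hu
    have : e ∉ u.edgeSet := fun h => he ((SimpleGraph.edgeSet_mono ((hmemHC u).mp hu).2) h)
    simp [ind, this]
  have hoffu₀ : ∀ e ∉ G.edgeSet, ind u₀ e = 0 := by
    intro e he
    exact hoff e he u₀ hu₀HC
  constructor
  · rintro ⟨t, ht⟩
    refine ⟨1 - t * (N e₀ / HC.card), -(t * (N e₀ / HC.card)), by ring, ?_⟩
    intro e he
    have h1 := congrFun ht e
    simp only [xbar] at h1
    have h2 : N e = N e₀ := hconst e he e₀ he₀G
    have h3 : (∑ u ∈ HC, ind u e * s u) = ∑ u ∈ HC, s u * ind u e := by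
      exact Finset.sum_congr rfl fun u _ => mul_comm _ _
    rw [h3]
    rw [show (∑ u ∈ HC, ind u e) = N e from rfl, h2] at h1
    by_cases hmem : e ∈ u₀.edgeSet
    · simp only [ind, if_pos hmem] at h1
      simp only [if_pos hmem]
      linarith
    · simp only [ind, if_neg hmem] at h1
      simp only [if_neg hmem]
      linarith
  · rintro ⟨a, b, hab, hval⟩
    refine ⟨-b * HC.card / N e₀, ?_⟩
    funext e
    by_cases he : e ∈ G.edgeSet
    · have h2 : N e = N e₀ := hconst e he e₀ he₀G
      have hx : xbar e = N e₀ / HC.card := by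
        simp only [xbar]; rw [show (∑ u ∈ HC, ind u e) = N e from rfl, h2]
      have h3 : (∑ u ∈ HC, s u * ind u e) = ∑ u ∈ HC, ind u e * s u := by
        exact Finset.sum_congr rfl fun u _ => mul_comm _ _
      have hv := hval e he
      rw [hx, h3, hv]
      have hN0 : N e₀ ≠ 0 := ne_of_gt hNe₀
      have hts : -b * (HC.card : ℝ) / N e₀ * (N e₀ / (HC.card : ℝ)) = -b := by
        field_simp
      rw [hts]
      by_cases hmem : e ∈ u₀.edgeSet
      · simp only [ind, if_pos hmem]; linarith
      · simp only [ind, if_neg hmem]; linarith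
    · have h0 : (∑ u ∈ HC, s u * ind u e) = 0 := by
        refine Finset.sum_eq_zero fun u hu => ?_
        rw [hoff e he u hu, mul_zero]
      have hx : xbar e = 0 := by
        simp only [xbar]
        rw [show (∑ u ∈ HC, ind u e) = 0 from Finset.sum_eq_zero (hoff e he), zero_div]
      rw [hoffu₀ e he, h0, hx, mul_zero, zero_div, sub_zero]
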